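/- arXiv:1409.0215 — 8 statements merged into one kernel-verified Lean document; each statement's English description precedes it below -/
import Mathlib

section
/- For every integer p ≥ 2, the real number 2·cos(π/(2p)) does not belong to the subfield ℚ(4·cos²(π/(2p))) of ℝ, i.e. 2·cos(π/(2p)) is not an element of the intermediate field of ℝ/ℚ generated over ℚ by the single element (2·cos(π/(2p)))². -/
open Real IntermediateField Polynomial

-- key lemma: any rational polynomial vanishing at t := 2cos(π/(2p)) vanishes at -t.
lemma key_conj (p : ℕ) (hp : 2 ≤ p) (m : Polynomial ℚ)
    (h : Polynomial.aeval (2 * Real.cos (Real.pi / (2 * p))) m = 0) :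
    Polynomial.aeval (-(2 * Real.cos (Real.pi / (2 * p)))) m = 0 := by
  have hp0 : (p : ℝ) ≠ 0 := by positivity
  set θ : ℝ := Real.pi / (2 * p) with hθ
  set t : ℝ := 2 * Real.cos θ with ht
  have hn : (4 * p) ≠ 0 := by omega
  set n : ℕ := 4 * p with hndef
  set ζ : ℂ := Complex.exp (2 * Real.pi * Complex.I / n) with hζdef
  have hζ : IsPrimitiveRoot ζ n := Complex.isPrimitiveRoot_exp n hn
  have hζθ : ζ = Complex.exp (θ * Complex.I) := by
    rw [hζdef]
    congr 1
    have h1 : (n : ℂ) = 4 * p := by push_cast [hndef]; ring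
    have h2 : (p : ℂ) ≠ 0 := Nat.cast_ne_zero.mpr (by omega)
    rw [h1, hθ]
    push_cast
    field_simp
    ring
  have hsum : ∀ x : ℝ, Complex.exp (x * Complex.I) + (Complex.exp (x * Complex.I))⁻¹
      = ((2 * Real.cos x : ℝ) : ℂ) := by
    intro x
    rw [← Complex.exp_neg, Complex.exp_mul_I, ← neg_mul, Complex.exp_mul_I]
    push_cast
    simp [Complex.cos_neg, Complex.sin_neg]
    ring
  set ζ' : ℂ := ζ ^ (2 * p - 1) with hζ'def
  have hcop : Nat.Coprime (2 * p - 1) n := by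
    have h2 : Nat.Coprime (2 * p - 1) (2 * p) := by
      have := Nat.coprime_add_self_right.mpr (Nat.coprime_one_right (2 * p - 1))
      rwa [show 1 + (2 * p - 1) = 2 * p by omega] at this
    have hodd : Nat.Coprime (2 * p - 1) 2 :=
      Odd.coprime_two_right (Nat.Even.sub_odd (by omega) (even_two_mul p) (by norm_num))
    have hpc : Nat.Coprime (2 * p - 1) p := h2.coprime_dvd_right ⟨2, by ring⟩
    have := hodd.mul_right h2
    rwa [show 2 * (2 * p) = n by omega] at this
  have hζ' : IsPrimitiveRoot ζ' n := hζ.pow_of_coprime _ hcop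
  have hζ'θ : ζ' = Complex.exp (((Real.pi - θ) : ℝ) * Complex.I) := by
    rw [hζ'def, hζθ, ← Complex.exp_nat_mul]
    congr 1
    have h1 : ((2 * p - 1 : ℕ) : ℂ) = 2 * p - 1 := by
      push_cast [Nat.cast_sub (by omega : 1 ≤ 2 * p)]; ring
    have hpz : (p : ℂ) ≠ 0 := Nat.cast_ne_zero.mpr (by omega)
    rw [h1, hθ]
    push_cast
    field_simp
  -- cyclotomic setup
  have hn0 : 0 < n := by omega
  set f : Polynomial ℚ := Polynomial.cyclotomic n ℚ with hfdef
  have hirr : Irreducible f := Polynomial.cyclotomic.irreducible_rat hn0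
  have : Fact (Irreducible f) := ⟨hirr⟩
  have haev : ∀ z : ℂ, IsPrimitiveRoot z n → Polynomial.aeval z f = 0 := by
    intro z hz
    have := hz.isRoot_cyclotomic hn0
    rwa [Polynomial.aeval_def, Polynomial.eval₂_eq_eval_map, Polynomial.map_cyclotomic]
  set φ₁ := AdjoinRoot.liftAlgHom f (Algebra.ofId ℚ ℂ) ζ (by rw [← haev ζ hζ, Polynomial.aeval_def]; rfl) with hφ₁
  set φ₂ := AdjoinRoot.liftAlgHom f (Algebra.ofId ℚ ℂ) ζ' (by rw [← haev ζ' hζ', Polynomial.aeval_def]; rfl) with hφ₂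
  set u : AdjoinRoot f := AdjoinRoot.root f + (AdjoinRoot.root f)⁻¹ with hu
  have hφ₁u : φ₁ u = ((t : ℝ) : ℂ) := by
    rw [hu, map_add, map_inv₀, hφ₁, AdjoinRoot.liftAlgHom_root, hζθ, hsum]
  have hφ₂u : φ₂ u = ((-t : ℝ) : ℂ) := by
    rw [hu, map_add, map_inv₀, hφ₂, AdjoinRoot.liftAlgHom_root]
    show ζ' + ζ'⁻¹ = _
    rw [hζ'θ, hsum]
    norm_cast
    rw [Real.cos_pi_sub, ht]
    ring
  -- push h to ℂ
  have htC : Polynomial.aeval ((t : ℝ) : ℂ) m = 0 := by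
    have := Polynomial.aeval_algebraMap_apply ℂ t m
    rw [h, map_zero, Complex.coe_algebraMap] at this
    exact this
  have hum : Polynomial.aeval u m = 0 := by
    have hinj : Function.Injective φ₁ := φ₁.toRingHom.injective
    apply hinj
    rw [← Polynomial.aeval_algHom_apply, hφ₁u, htC, map_zero]
  have hmt : Polynomial.aeval ((-t : ℝ) : ℂ) m = 0 := by
    rw [← hφ₂u, Polynomial.aeval_algHom_apply, hum, map_zero]
  have hfin := Polynomial.aeval_algebraMap_apply ℂ (-t : ℝ) m
  rw [Complex.coe_algebraMap, hmt] at hfin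
  exact_mod_cast hfin.symm

theorem stmt_0 (p : ℕ) (hp : 2 ≤ p) :
    (2 * Real.cos (Real.pi / (2 * p))) ∉
      IntermediateField.adjoin ℚ ({(2 * Real.cos (Real.pi / (2 * p))) ^ 2} : Set ℝ) := by
  intro hmem
  set t : ℝ := 2 * Real.cos (Real.pi / (2 * p)) with ht
  have hp2 : (2 : ℝ) ≤ p := by exact_mod_cast hp
  have hppos : (0:ℝ) < p := by positivity
  have htpos : 0 < t := by
    rw [ht]
    have h1 : 0 < Real.pi / (2 * p) := by positivity
    have h2 : Real.pi / (2 * p) < Real.pi / 2 := by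
      apply div_lt_div_of_pos_left Real.pi_pos (by norm_num)
      linarith
    have := Real.cos_pos_of_mem_Ioo ⟨by linarith, h2⟩
    linarith
  obtain ⟨r, s, hrs⟩ := (IntermediateField.mem_adjoin_simple_iff ℚ t).mp hmem
  have hs0 : Polynomial.aeval (t ^ 2) s ≠ 0 := by
    intro h0
    rw [h0, div_zero] at hrs
    exact htpos.ne' hrs
  have heq : t * Polynomial.aeval (t ^ 2) s = Polynomial.aeval (t ^ 2) r := by
    exact (eq_div_iff hs0).mp hrs
  set F : Polynomial ℚ := Polynomial.X * s.comp (Polynomial.X ^ 2)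
      - r.comp (Polynomial.X ^ 2) with hF
  have hcomp : ∀ (q : Polynomial ℚ) (x : ℝ),
      Polynomial.aeval x (q.comp (Polynomial.X ^ 2)) = Polynomial.aeval (x ^ 2) q := by
    intro q x
    simp [Polynomial.aeval_comp]
  have hFt : Polynomial.aeval t F = 0 := by
    rw [hF]
    simp only [map_sub, map_mul, Polynomial.aeval_X, hcomp]
    rw [heq]
    ring
  have hFmt := key_conj p hp F hFt
  rw [← ht] at hFmt
  rw [hF] at hFmt
  simp only [map_sub, map_mul, Polynomial.aeval_X, hcomp, neg_sq] at hFmt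
  rw [← heq] at hFmt
  have hts : t * Polynomial.aeval (t ^ 2) s = 0 := by linarith
  rcases mul_eq_zero.mp hts with h | h
  · exact htpos.ne' h
  · exact hs0 h
end

section
/- For every integer p ≥ 2, the real number cos(π/(2p)) does not belong to the subfield ℚ(cos(π/p)) of ℝ, i.e. cos(π/(2p)) is not an element of the intermediate field of ℝ/ℚ generated over ℚ by cos(π/p). -/
open Real IntermediateField

open Polynomial in
theorem stmt_1 (p : ℕ) (hp : 2 ≤ p) :
    Real.cos (Real.pi / (2 * p)) ∉
      IntermediateField.adjoin ℚ ({Real.cos (Real.pi / p)} : Set ℝ) := by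
  intro hmem
  have hpR : (0:ℝ) < p := by
    have : (2:ℝ) ≤ p := by exact_mod_cast hp
    linarith
  set θ : ℝ := Real.pi / (2 * p) with hθ
  set x : ℝ := Real.cos θ with hxdef
  set c : ℝ := Real.cos (Real.pi / p) with hcdef
  have hθpos : 0 < θ := by
    rw [hθ]; positivity
  have hθlt : θ < Real.pi / 2 := by
    rw [hθ]
    apply div_lt_div_of_pos_left Real.pi_pos (by norm_num)
    have h2 : (2:ℝ) ≤ p := by exact_mod_cast hp
    linarith
  have hxpos : 0 < x :=
    Real.cos_pos_of_mem_Ioo ⟨by linarith [Real.pi_pos], hθlt⟩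
  rw [IntermediateField.mem_adjoin_simple_iff] at hmem
  obtain ⟨r, s, hrs⟩ := hmem
  have hs : Polynomial.aeval c s ≠ 0 := by
    intro h
    rw [h, div_zero] at hrs
    exact hxpos.ne' hrs
  have hmul : x * Polynomial.aeval c s = Polynomial.aeval c r := by
    rw [hrs]; field_simp
  -- complex setup
  set ζ : ℂ := Complex.exp (θ * Complex.I) with hζdef
  have hζk : ∀ k : ℕ, ζ ^ k = Complex.exp (((k * θ : ℝ)) * Complex.I) := by
    intro k
    rw [hζdef, ← Complex.exp_nat_mul]
    congr 1
    push_cast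
    ring
  have h2p : ζ ^ (2 * p) = -1 := by
    rw [hζk]
    have : ((2 * p : ℕ) * θ : ℝ) = Real.pi := by
      rw [hθ]; push_cast; field_simp
    rw [this, Complex.exp_pi_mul_I]
  have h4p : ζ ^ (4 * p) = 1 := by
    rw [show 4 * p = 2 * p * 2 by ring, pow_mul, h2p]
    norm_num
  have hpow41 : ζ ^ (4 * p - 1) = ζ⁻¹ := by
    apply eq_inv_of_mul_eq_one_left
    rw [← pow_succ, show 4 * p - 1 + 1 = 4 * p by omega]
    exact h4p
  have hpow42 : ζ ^ (4 * p - 2) = (ζ ^ 2)⁻¹ := by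
    apply eq_inv_of_mul_eq_one_left
    rw [← pow_add, show 4 * p - 2 + 2 = 4 * p by omega]
    exact h4p
  have prim : IsPrimitiveRoot ζ (4 * p) := by
    have h0 : 4 * p ≠ 0 := by omega
    have key := Complex.isPrimitiveRoot_exp (4 * p) h0
    have : (2 * Real.pi * Complex.I / (4 * p : ℕ) : ℂ) = θ * Complex.I := by
      rw [hθ]
      have hp0 : ((4 * p : ℕ) : ℂ) ≠ 0 := by
        exact_mod_cast (by omega : (4 * p : ℕ) ≠ 0)
      field_simp
      push_cast
      have hp1 : (p : ℂ) ≠ 0 := by exact_mod_cast (by omega : p ≠ 0)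
      field_simp
      norm_num
    rwa [this] at key
  have hcop : Nat.Coprime (2 * p + 1) (4 * p) := by
    have h2 : Nat.Coprime (2 * p + 1) 2 := by
      have := (Nat.coprime_add_mul_left_left 1 2 p).mpr (Nat.coprime_one_left 2)
      rwa [show 1 + 2 * p = 2 * p + 1 by ring] at this
    have hP : Nat.Coprime (2 * p + 1) p := by
      have := (Nat.coprime_add_mul_left_left 1 p 2).mpr (Nat.coprime_one_left p)
      rwa [show 1 + p * 2 = 2 * p + 1 by ring] at this
    have h4 : Nat.Coprime (2 * p + 1) 4 := by
      have := h2.pow_right 2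
      norm_num at this
      exact this
    have := h4.mul_right hP
    exact this
  have primneg : IsPrimitiveRoot (-ζ) (4 * p) := by
    have key := prim.pow_of_coprime (2 * p + 1) hcop
    rwa [pow_succ, h2p, neg_one_mul] at key
  have hroot : ∀ U : ℚ[X], Polynomial.aeval ζ U = 0 → Polynomial.aeval (-ζ) U = 0 := by
    intro U hU
    have hpos : 0 < 4 * p := by omega
    have hdvd : minpoly ℚ (-ζ) ∣ U := by
      rw [← Polynomial.cyclotomic_eq_minpoly_rat primneg hpos,
        Polynomial.cyclotomic_eq_minpoly_rat prim hpos]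
      exact minpoly.dvd ℚ ζ hU
    exact Polynomial.aeval_eq_zero_of_dvd_aeval_eq_zero hdvd (minpoly.aeval ℚ (-ζ))
  -- cosine identities
  have hcos : ∀ a : ℝ, Complex.exp (a * Complex.I) + (Complex.exp (a * Complex.I))⁻¹
      = 2 * ((Real.cos a : ℝ) : ℂ) := by
    intro a
    rw [← Complex.exp_neg, Complex.ofReal_cos, Complex.two_cos, neg_mul]
  have hxid : ζ + ζ ^ (4 * p - 1) = 2 * (x : ℂ) := by
    rw [hpow41, hxdef]
    have := hcos θ
    rw [hζdef]
    exact_mod_cast this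
  have hcid : ζ ^ 2 + ζ ^ (4 * p - 2) = 2 * (c : ℂ) := by
    rw [hpow42, hζk 2, hcdef]
    have h2θ : ((2 : ℕ) * θ : ℝ) = Real.pi / p := by
      rw [hθ]; push_cast; field_simp
    rw [h2θ]
    exact hcos (Real.pi / p)
  -- the polynomial identity
  set A : ℚ[X] := Polynomial.C (1/2 : ℚ) * (Polynomial.X + Polynomial.X ^ (4 * p - 1)) with hA
  set B : ℚ[X] := Polynomial.C (1/2 : ℚ) * (Polynomial.X ^ 2 + Polynomial.X ^ (4 * p - 2))
    with hB
  set U : ℚ[X] := A * (s.comp B) - r.comp B with hU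
  have halg : ∀ q : ℚ, (algebraMap ℚ ℂ q) = (q : ℂ) := fun q => by
    simp [eq_ratCast]
  have hAζ : Polynomial.aeval ζ A = (x : ℂ) := by
    rw [hA]
    simp only [map_mul, map_add, Polynomial.aeval_X, Polynomial.aeval_C, map_pow, halg]
    rw [hxid]
    push_cast
    ring
  have hBζ : Polynomial.aeval ζ B = (c : ℂ) := by
    rw [hB]
    simp only [map_mul, map_add, Polynomial.aeval_X, Polynomial.aeval_C, map_pow, halg]
    rw [hcid]
    push_cast
    ring
  have hAneg : Polynomial.aeval (-ζ) A = -(x : ℂ) := by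
    rw [hA]
    simp only [map_mul, map_add, Polynomial.aeval_X, Polynomial.aeval_C, map_pow, halg]
    have hodd : Odd (4 * p - 1) := ⟨2 * p - 1, by omega⟩
    rw [hodd.neg_pow]
    have : (-ζ + -ζ ^ (4 * p - 1)) = -(ζ + ζ ^ (4 * p - 1)) := by ring
    rw [this, hxid]
    push_cast
    ring
  have hBneg : Polynomial.aeval (-ζ) B = (c : ℂ) := by
    rw [hB]
    simp only [map_mul, map_add, Polynomial.aeval_X, Polynomial.aeval_C, map_pow, halg]
    have heven : Even (4 * p - 2) := ⟨2 * p - 1, by omega⟩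
    rw [heven.neg_pow, neg_sq]
    rw [hcid]
    push_cast
    ring
  have hsC : Polynomial.aeval ((c : ℝ) : ℂ) s = ((Polynomial.aeval c s : ℝ) : ℂ) := by
    rw [show ((c : ℝ) : ℂ) = algebraMap ℝ ℂ c from rfl, Polynomial.aeval_algebraMap_apply]
    rfl
  have hrC : Polynomial.aeval ((c : ℝ) : ℂ) r = ((Polynomial.aeval c r : ℝ) : ℂ) := by
    rw [show ((c : ℝ) : ℂ) = algebraMap ℝ ℂ c from rfl, Polynomial.aeval_algebraMap_apply]
    rfl
  have hUζ : Polynomial.aeval ζ U = 0 := by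
    rw [hU]
    simp only [map_sub, map_mul, Polynomial.aeval_comp, hAζ, hBζ, hsC, hrC]
    rw [← Complex.ofReal_mul, ← Complex.ofReal_sub, Complex.ofReal_eq_zero]
    rw [hmul]
    ring
  have hUneg := hroot U hUζ
  rw [hU] at hUneg
  simp only [map_sub, map_mul, Polynomial.aeval_comp, hAneg, hBneg, hsC, hrC] at hUneg
  have hreal : -x * Polynomial.aeval c s - Polynomial.aeval c r = 0 := by
    rw [← Complex.ofReal_eq_zero]
    push_cast
    linear_combination hUneg
  have hs0 : Polynomial.aeval c s = 0 := by
    have h2 : (2 * x) * Polynomial.aeval c s = 0 := by linear_combination hmul - hreal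
    rcases mul_eq_zero.mp h2 with h | h
    · linarith
    · exact h
  exact hs hs0
end

section
/- For every integer n ≥ 3, the real number cos(2π/n) is algebraic over ℚ and the natural degree of its minimal polynomial over ℚ equals φ(n)/2, where φ is Euler's totient function. -/
open Polynomial IntermediateField

set_option maxHeartbeats 1000000
set_option synthInstance.maxHeartbeats 100000

theorem stmt_3 (n : ℕ) (hn : 3 ≤ n) :
    IsAlgebraic ℚ (Real.cos (2 * Real.pi / n)) ∧
      (minpoly ℚ (Real.cos (2 * Real.pi / n))).natDegree = n.totient / 2 := by
  have hn0 : (n : ℕ) ≠ 0 := by omega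
  set θ : ℝ := 2 * Real.pi / n with hθ
  set ζ : ℂ := Complex.exp (2 * Real.pi * Complex.I / n) with hζdef
  have hprim : IsPrimitiveRoot ζ n := Complex.isPrimitiveRoot_exp n hn0
  have hζeq : ζ = Complex.exp ((θ : ℂ) * Complex.I) := by
    rw [hζdef, hθ]; push_cast; ring_nf
  set c : ℂ := ((Real.cos θ : ℝ) : ℂ) with hc
  have hζne : ζ ≠ 0 := Complex.exp_ne_zero _
  have hinv : ζ⁻¹ = Complex.exp (-((θ : ℂ) * Complex.I)) := by
    rw [hζeq, ← Complex.exp_neg]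
  have hsum : ζ + ζ⁻¹ = 2 * c := by
    rw [hinv, hζeq, hc, Complex.ofReal_cos, Complex.two_cos, neg_mul]
  -- c is integral over ℚ
  have hζint : IsIntegral ℚ ζ := (hprim.isIntegral (by omega)).tower_top
  have hζalg : IsAlgebraic ℚ ζ := hζint.isAlgebraic
  have hinvint : IsIntegral ℚ ζ⁻¹ := by
    have hpow : ζ⁻¹ = ζ ^ (n - 1) := by
      have h1 : ζ ^ n = 1 := hprim.pow_eq_one
      have h2 : ζ * ζ ^ (n - 1) = 1 := by
        rw [← pow_succ', Nat.sub_add_cancel (by omega)]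
        exact h1
      exact inv_eq_of_mul_eq_one_right h2
    rw [hpow]; exact hζint.pow _
  have hcint : IsIntegral ℚ c := by
    have : c = algebraMap ℚ ℂ (1 / 2) * (ζ + ζ⁻¹) := by
      rw [hsum]; push_cast; field_simp; norm_num
    rw [this]
    exact (isIntegral_algebraMap).mul (hζint.add hinvint)
  have hcalg : IsAlgebraic ℚ c := hcint.isAlgebraic
  -- K = ℚ(c)
  set K : IntermediateField ℚ ℂ := ℚ⟮c⟯ with hK
  -- every element of K is real
  have hKreal : ∀ z ∈ K, ∃ r : ℝ, (r : ℂ) = z := by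
    intro z hz
    have hsub : K ≤ Subfield.toIntermediateField Complex.ofRealHom.fieldRange
        (fun q : ℚ => ⟨(q : ℝ), by simp⟩) := by
      show ℚ⟮c⟯ ≤ _
      apply IntermediateField.adjoin_le_iff.mpr
      intro x hx
      rcases hx with rfl
      exact ⟨Real.cos θ, rfl⟩
    exact hsub hz
  -- ζ is not real
  have hζim : ζ.im ≠ 0 := by
    rw [hζeq]
    rw [Complex.exp_ofReal_mul_I_im]
    have hpos : 0 < θ := by
      rw [hθ]; positivity
    have hlt : θ < Real.pi := by
      rw [hθ]
      rw [div_lt_iff₀ (by positivity)]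
      have h3 : (3 : ℝ) ≤ n := by exact_mod_cast hn
      nlinarith [Real.pi_pos]
    exact ne_of_gt (Real.sin_pos_of_pos_of_lt_pi hpos hlt)
  -- minpoly of ζ over K has degree 2
  have hζintK : IsIntegral K ζ := hζint.tower_top
  have hdeg2 : (minpoly K ζ).natDegree = 2 := by
    have hle : 2 ≤ (minpoly K ζ).natDegree := by
      rw [minpoly.two_le_natDegree_iff hζintK]
      rintro ⟨⟨k, hk⟩, hke⟩
      obtain ⟨r, hr⟩ := hKreal k hk
      apply hζim
      have : ζ = k := by rw [← hke]; rfl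
      rw [this, ← hr, Complex.ofReal_im]
    have hge : (minpoly K ζ).natDegree ≤ 2 := by
      have hcK : c ∈ K := IntermediateField.mem_adjoin_simple_self ℚ c
      have h2cK : (2 : ℂ) * c ∈ K := by
        have h := K.add_mem hcK hcK
        convert h using 1; ring
      set q : K[X] := X ^ 2 - C (⟨2 * c, h2cK⟩ : K) * X + 1 with hq
      have hqdeg : q.natDegree = 2 := by
        rw [hq]
        compute_degree!
      have hqne : q ≠ 0 := by
        intro h
        rw [h] at hqdeg
        simp at hqdeg
      have hqroot : Polynomial.aeval ζ q = 0 := by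
        rw [hq]
        simp only [map_add, map_sub, map_mul, map_pow, aeval_X, aeval_C, map_one]
        have halg : (algebraMap K ℂ) (⟨2 * c, h2cK⟩ : K) = 2 * c := rfl
        rw [halg]
        have h1 : ζ ^ 2 + 1 = 2 * c * ζ := by
          linear_combination ζ * hsum - mul_inv_cancel₀ hζne
        linear_combination h1
      have := minpoly.degree_le_of_ne_zero K ζ hqne hqroot
      calc (minpoly K ζ).natDegree ≤ q.natDegree :=
            Polynomial.natDegree_le_natDegree this
        _ = 2 := hqdeg
    omega
  -- tower
  set d : ℕ := (minpoly ℚ c).natDegree with hd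
  have hKfin : Module.finrank ℚ K = d := IntermediateField.adjoin.finrank hcint
  have htop : (IntermediateField.adjoin K {ζ}).restrictScalars ℚ = ℚ⟮ζ⟯ := by
    rw [hK]
    refine (IntermediateField.adjoin_adjoin_left (F := ℚ) (S := {c}) {ζ}).trans ?_
    apply le_antisymm
    · apply IntermediateField.adjoin_le_iff.mpr
      intro x hx
      rcases hx with hx | hx
      · rcases hx with rfl
        have hζmem : ζ ∈ ℚ⟮ζ⟯ := IntermediateField.mem_adjoin_simple_self ℚ ζ
        have : c = (algebraMap ℚ ℂ) (1 / 2) * (ζ + ζ⁻¹) := by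
          rw [hsum]; push_cast; field_simp; norm_num
        rw [this]
        exact mul_mem (IntermediateField.algebraMap_mem _ _) (add_mem hζmem (inv_mem hζmem))
      · rcases hx with rfl
        exact IntermediateField.mem_adjoin_simple_self ℚ ζ
    · apply IntermediateField.adjoin_le_iff.mpr
      intro x hx
      rcases hx with rfl
      exact IntermediateField.subset_adjoin ℚ _ (Set.mem_union_right _ rfl)
  have hζfin : Module.finrank ℚ ℚ⟮ζ⟯ = n.totient := by
    rw [IntermediateField.adjoin.finrank hζint,
      ← Polynomial.cyclotomic_eq_minpoly_rat hprim (by omega),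
      Polynomial.natDegree_cyclotomic]
  have hKζfin : Module.finrank K (IntermediateField.adjoin K {ζ}) = 2 := by
    rw [IntermediateField.adjoin.finrank hζintK, hdeg2]
  have hmul : Module.finrank ℚ K * Module.finrank K (IntermediateField.adjoin K {ζ})
      = Module.finrank ℚ ((IntermediateField.adjoin K {ζ}).restrictScalars ℚ) := by
    exact Module.finrank_mul_finrank ℚ K (IntermediateField.adjoin K {ζ})
  rw [htop, hζfin, hKfin, hKζfin] at hmul
  -- transfer to real
  have hmap : (algebraMap ℝ ℂ) (Real.cos θ) = c := rfl
  have hminEq : minpoly ℚ (Real.cos θ) = minpoly ℚ c := by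
    rw [← hmap, minpoly.algebraMap_eq Complex.ofReal_injective]
  constructor
  · have : IsIntegral ℚ (Real.cos θ) := by
      have := hcint
      rw [← hmap] at this
      exact IsIntegral.tower_bot_of_field this
    exact this.isAlgebraic
  · rw [hminEq, ← hd]
    omega
end

section
/- For every integer p ≥ 2 and all real numbers a, b belonging to the subfield ℚ(cos(π/p)) of ℝ: if a + b·(2·cos(π/(2p))) = 0, then a = 0 and b = 0. -/
open Polynomial IntermediateField Complex

set_option maxHeartbeats 1000000
set_option synthInstance.maxHeartbeats 1000000

-- the subfield of ℂ consisting of real numbers, as an intermediate field over ℚ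
noncomputable def realIF : IntermediateField ℚ ℂ :=
  Subfield.toIntermediateField Complex.ofRealHom.fieldRange
    (fun x => ⟨(x : ℝ), by simp [Complex.ofRealHom]⟩)

lemma mem_realIF_im {z : ℂ} (hz : z ∈ realIF) : z.im = 0 := by
  obtain ⟨r, hr⟩ := hz
  rw [← hr]; simp [Complex.ofRealHom]

lemma key_complex (n : ℕ) (hn : 3 ≤ n) :
    (minpoly ℚ ((2 * Real.cos (2 * Real.pi / n) : ℝ) : ℂ)).natDegree = n.totient / 2 := by
  have hn0 : (0:ℕ) < n := by omega
  have hnR : (0:ℝ) < n := by exact_mod_cast hn0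
  set θ : ℝ := 2 * Real.pi / n with hθdef
  have hθpos : 0 < θ := by positivity
  have hθlt : θ < Real.pi := by
    rw [hθdef, div_lt_iff₀ hnR]
    nlinarith [Real.pi_pos,
      mul_le_mul_of_nonneg_left (show (3:ℝ) ≤ n by exact_mod_cast hn) Real.pi_pos.le]
  set ζ : ℂ := Complex.exp (2 * Real.pi * Complex.I / n) with hζdef
  have hζ : IsPrimitiveRoot ζ n := Complex.isPrimitiveRoot_exp n (by omega)
  have hζeq : ζ = Complex.exp (θ * Complex.I) := by
    rw [hζdef, hθdef]
    congr 1
    push_cast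
    ring
  have hζ0 : ζ ≠ 0 := Complex.exp_ne_zero _
  set c : ℂ := ζ + ζ⁻¹ with hcdef
  have hsum : c = ((2 * Real.cos θ : ℝ) : ℂ) := by
    rw [hcdef, hζeq, ← Complex.exp_neg, show -((θ:ℂ) * Complex.I) = ((-θ : ℝ):ℂ) * Complex.I by
      push_cast; ring, Complex.exp_mul_I, Complex.exp_mul_I]
    push_cast [Complex.ofReal_cos, Complex.ofReal_sin]
    simp only [Complex.ofReal_neg, Complex.cos_neg, Complex.sin_neg]
    ring
  have him : ζ.im = Real.sin θ := by
    rw [hζeq]; exact Complex.exp_ofReal_mul_I_im θ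
  have hsin : 0 < Real.sin θ := Real.sin_pos_of_pos_of_lt_pi hθpos hθlt
  have hζint : IsIntegral ℚ ζ := (hζ.isIntegral hn0).tower_top
  have hζinv : ζ⁻¹ = ζ ^ (n - 1) := by
    have hmul : ζ ^ (n - 1) * ζ = 1 := by
      rw [← pow_succ, show n - 1 + 1 = n by omega]
      exact hζ.pow_eq_one
    exact (eq_inv_of_mul_eq_one_left hmul).symm
  have hcint : IsIntegral ℚ c := by
    rw [hcdef, hζinv]
    exact hζint.add (hζint.pow _)
  set F : IntermediateField ℚ ℂ := IntermediateField.adjoin ℚ {c} with hFdef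
  have hcF : c ∈ F := IntermediateField.subset_adjoin ℚ {c} rfl
  have hFreal : F ≤ realIF := by
    rw [hFdef, IntermediateField.adjoin_le_iff]
    rintro x rfl
    rw [hsum]
    exact ⟨2 * Real.cos θ, rfl⟩
  -- minimal polynomial of ζ over F has degree 2
  have hζintF : IsIntegral F ζ := hζint.tower_top
  set q : Polynomial F := Polynomial.X ^ 2 - Polynomial.C ⟨c, hcF⟩ * Polynomial.X + 1 with hqdef
  have hqdeg : q.degree = 2 := by
    rw [hqdef]
    compute_degree!
  have hqne : q ≠ 0 := fun h0 => by simp [h0] at hqdeg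
  have hqeval : Polynomial.aeval ζ q = 0 := by
    have halg : (algebraMap F ℂ) ⟨c, hcF⟩ = c := rfl
    rw [hqdef]
    simp only [map_add, map_sub, map_mul, map_pow, map_one, Polynomial.aeval_X,
      Polynomial.aeval_C, halg]
    rw [hcdef]
    field_simp
    ring
  have hdegle : (minpoly F ζ).degree ≤ 2 := by
    have := minpoly.degree_le_of_ne_zero F ζ hqne hqeval
    rwa [hqdeg] at this
  have hndle : (minpoly F ζ).natDegree ≤ 2 := by
    exact Polynomial.natDegree_le_iff_degree_le.mpr (by exact_mod_cast hdegle)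
  have hndpos : 0 < (minpoly F ζ).natDegree := minpoly.natDegree_pos hζintF
  have hndne1 : (minpoly F ζ).natDegree ≠ 1 := by
    intro h1
    have : ζ ∈ (algebraMap F ℂ).range := (minpoly.natDegree_eq_one_iff).mp h1
    obtain ⟨x, hx⟩ := this
    have : ζ.im = 0 := by
      rw [← hx]
      exact mem_realIF_im (hFreal x.2)
    rw [him] at this
    linarith
  have hnd2 : (minpoly F ζ).natDegree = 2 := by omega
  -- finrank computations
  have h2 : Module.finrank F (IntermediateField.adjoin F {ζ}) = 2 := by
    rw [IntermediateField.adjoin.finrank hζintF, hnd2]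
  have hres : (IntermediateField.adjoin F {ζ}).restrictScalars ℚ =
      IntermediateField.adjoin ℚ {ζ} := by
    erw [IntermediateField.adjoin_adjoin_left (F := ℚ) (S := {c})]
    apply le_antisymm
    · rw [IntermediateField.adjoin_le_iff]
      rintro x (rfl | rfl)
      · have hζmem : ζ ∈ IntermediateField.adjoin ℚ {ζ} :=
          IntermediateField.subset_adjoin ℚ {ζ} rfl
        rw [hcdef]
        exact add_mem hζmem (inv_mem hζmem)
      · exact IntermediateField.subset_adjoin ℚ {ζ} rfl
    · exact IntermediateField.adjoin.mono ℚ _ _ (Set.subset_union_right)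
  have h3 : Module.finrank ℚ (IntermediateField.adjoin ℚ ({ζ} : Set ℂ)) = n.totient := by
    rw [IntermediateField.adjoin.finrank hζint, ← Polynomial.cyclotomic_eq_minpoly_rat hζ hn0,
      Polynomial.natDegree_cyclotomic]
  have h4 : Module.finrank ℚ F * 2 = n.totient := by
    rw [← h2, Module.finrank_mul_finrank ℚ F (IntermediateField.adjoin F {ζ})]
    rw [← h3, ← hres]
    rfl
  have heven : Even n.totient := Nat.totient_even (by omega)
  obtain ⟨k, hk⟩ := heven
  rw [← hsum, ← IntermediateField.adjoin.finrank hcint]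
  change Module.finrank ℚ F = n.totient / 2
  omega

lemma key_real (n : ℕ) (hn : 3 ≤ n) :
    (minpoly ℚ (2 * Real.cos (2 * Real.pi / n))).natDegree = n.totient / 2 := by
  rw [← key_complex n hn]
  congr 1
  have := minpoly.algebraMap_eq (A := ℚ) (B := ℝ) (B' := ℂ) Complex.ofReal_injective
    (2 * Real.cos (2 * Real.pi / n))
  rw [← this]; norm_num [Complex.coe_algebraMap]

lemma integral_two_cos (n : ℕ) (hn : 3 ≤ n) :
    IsIntegral ℚ (2 * Real.cos (2 * Real.pi / n)) := by
  rw [← minpoly.ne_zero_iff]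
  intro h0
  have h1 := key_real n hn
  rw [h0, Polynomial.natDegree_zero] at h1
  have h2 : 0 < n.totient := Nat.totient_pos.mpr (by omega)
  obtain ⟨k, hk⟩ := Nat.totient_even (show 2 < n by omega)
  omega

lemma two_mem_IF (S : IntermediateField ℚ ℝ) : (2:ℝ) ∈ S := by
  have h1 := one_mem S
  simpa [one_add_one_eq_two] using add_mem h1 h1

lemma adjoin_two_mul (x : ℝ) :
    IntermediateField.adjoin ℚ ({2 * x} : Set ℝ) = IntermediateField.adjoin ℚ {x} := by
  apply le_antisymm <;> rw [IntermediateField.adjoin_le_iff, Set.singleton_subset_iff]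
  · exact mul_mem (two_mem_IF _) (IntermediateField.subset_adjoin ℚ {x} rfl)
  · have hx : 2 * x ∈ IntermediateField.adjoin ℚ ({2 * x} : Set ℝ) :=
      IntermediateField.subset_adjoin _ _ rfl
    have hdiv := div_mem hx (two_mem_IF (IntermediateField.adjoin ℚ ({2 * x} : Set ℝ)))
    rwa [mul_div_cancel_left₀ x two_ne_zero] at hdiv

theorem stmt_5 (p : ℕ) (hp : 2 ≤ p) (a b : ℝ)
    (ha : a ∈ IntermediateField.adjoin ℚ ({Real.cos (Real.pi / p)} : Set ℝ))
    (hb : b ∈ IntermediateField.adjoin ℚ ({Real.cos (Real.pi / p)} : Set ℝ))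
    (h : a + b * (2 * Real.cos (Real.pi / (2 * p))) = 0) :
    a = 0 ∧ b = 0 := by
  have hpR : (0:ℝ) < p := by exact_mod_cast (by omega : 0 < p)
  obtain ⟨t, ht⟩ : ∃ t : ℝ, t = 2 * Real.cos (Real.pi / (2 * p)) := ⟨_, rfl⟩
  obtain ⟨c, hc⟩ : ∃ c : ℝ, c = Real.cos (Real.pi / p) := ⟨_, rfl⟩
  rw [← ht] at h
  rw [← hc] at ha hb
  -- angle facts
  have hang1 : 2 * Real.pi / ((4 * p : ℕ) : ℝ) = Real.pi / (2 * p) := by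
    push_cast
    rw [div_eq_div_iff (by positivity) (by positivity)]
    ring
  have hang2 : 2 * Real.pi / ((2 * p : ℕ) : ℝ) = Real.pi / p := by
    push_cast
    rw [div_eq_div_iff (by positivity) hpR.ne']
    ring
  -- integrality
  have htint : IsIntegral ℚ t := by
    rw [ht, ← hang1]
    exact integral_two_cos (4 * p) (by omega)
  have h2cint : IsIntegral ℚ (2 * c) := by
    rw [hc, ← hang2]
    exact integral_two_cos (2 * p) (by omega)
  have hcint : IsIntegral ℚ c := by
    have : c = (2⁻¹ : ℚ) • (2 * c) := by
      rw [Rat.smul_def]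
      push_cast
      ring
    rw [this]
    exact IsIntegral.smul _ h2cint
  -- degree facts
  have hdeg_t : (minpoly ℚ t).natDegree = (4 * p).totient / 2 := by
    rw [ht, ← hang1]
    exact key_real (4 * p) (by omega)
  have hdeg_c : (minpoly ℚ (2 * c)).natDegree = (2 * p).totient / 2 := by
    rw [hc, ← hang2]
    exact key_real (2 * p) (by omega)
  set K : IntermediateField ℚ ℝ := IntermediateField.adjoin ℚ {c} with hK
  suffices hb0 : b = 0 by
    refine ⟨?_, hb0⟩
    rw [hb0] at h
    simpa using h
  by_contra hb0
  have htK : t ∈ K := by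
    have heq : t = -a / b := by
      field_simp
      linarith
    rw [heq]
    exact div_mem (neg_mem ha) hb
  have hle : IntermediateField.adjoin ℚ ({t} : Set ℝ) ≤ K :=
    IntermediateField.adjoin_le_iff.mpr (Set.singleton_subset_iff.mpr htK)
  have h1 : Module.finrank ℚ (IntermediateField.adjoin ℚ ({t} : Set ℝ)) =
      (4 * p).totient / 2 := by
    rw [IntermediateField.adjoin.finrank htint, hdeg_t]
  have h2 : Module.finrank ℚ K = (2 * p).totient / 2 := by
    rw [hK, ← adjoin_two_mul c, IntermediateField.adjoin.finrank h2cint, hdeg_c]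
  have ht4 : (4 * p).totient = 2 * (2 * p).totient := by
    rw [show 4 * p = 2 * (2 * p) by ring]
    exact Nat.totient_mul_of_prime_of_dvd Nat.prime_two ⟨p, rfl⟩
  have htpos : 0 < (2 * p).totient := Nat.totient_pos.mpr (by omega)
  have hKfd : FiniteDimensional ℚ K := IntermediateField.adjoin.finiteDimensional hcint
  have hmono : Module.finrank ℚ (IntermediateField.adjoin ℚ ({t} : Set ℝ)) ≤
      Module.finrank ℚ K := by
    have hsub : (IntermediateField.adjoin ℚ ({t} : Set ℝ)).toSubmodule ≤ K.toSubmodule := hle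
    have hfin : Module.Finite ℚ K.toSubmodule := hKfd
    exact Submodule.finrank_mono hsub
  rw [h1, h2] at hmono
  omega
end

section
/- Let U : ℕ → ℝ → ℝ → ℝ be defined by U 0 x y = 1, U 1 x y = 2x, U (2i) x y = 2y·U (2i−1) x y − U (2i−2) x y and U (2i+1) x y = 2x·U (2i) x y − U (2i−1) x y for i ≥ 1. Then for every i ∈ ℕ there exists a polynomial P over ℤ with natural degree i and leading coefficient 4^i such that for all real x, y one has U (2i) x y = (P.map (Int.cast : ℤ → ℝ)).eval (x·y). In particular, U (2i) x y depends only on the product x·y. -/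
open Polynomial

noncomputable def PQ : ℕ → Polynomial ℤ × Polynomial ℤ
  | 0 => (1, 1)
  | (i+1) => (4*X*(PQ i).2 - (PQ i).1, 4*X*(PQ i).2 - (PQ i).1 - (PQ i).2)

lemma PQ_deg (i : ℕ) :
    (PQ i).1.natDegree = i ∧ (PQ i).1.leadingCoeff = 4 ^ i ∧
    (PQ i).2.natDegree = i ∧ (PQ i).2.leadingCoeff = 4 ^ i := by
  induction i with
  | zero => simp [PQ]
  | succ i ih =>
    obtain ⟨hp, hpl, hq, hql⟩ := ih
    have hqne : (PQ i).2 ≠ 0 := by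
      intro h; rw [h] at hql; simp at hql
      exact absurd hql (by positivity)
    have h4 : (4 : Polynomial ℤ) = C 4 := by simp
    have h4X : (4*X*(PQ i).2).natDegree = i + 1 := by
      rw [mul_assoc, h4, natDegree_C_mul (by norm_num), natDegree_X_mul hqne, hq]
    have h4Xl : (4*X*(PQ i).2).leadingCoeff = 4 ^ (i+1) := by
      rw [mul_assoc, h4, leadingCoeff_mul, leadingCoeff_mul,
        leadingCoeff_C, leadingCoeff_X, hql]
      ring
    have hlt : (PQ i).1.natDegree < (4*X*(PQ i).2).natDegree := by omega
    have hdeg : ((PQ i).1).degree < (4*X*(PQ i).2).degree := by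
      apply degree_lt_degree; omega
    have hPdeg : (4*X*(PQ i).2 - (PQ i).1).natDegree = i + 1 := by
      rw [natDegree_sub_eq_left_of_natDegree_lt hlt, h4X]
    have hPl : (4*X*(PQ i).2 - (PQ i).1).leadingCoeff = 4 ^ (i+1) := by
      rw [leadingCoeff_sub_of_degree_lt hdeg, h4Xl]
    refine ⟨hPdeg, hPl, ?_, ?_⟩
    · show (4*X*(PQ i).2 - (PQ i).1 - (PQ i).2).natDegree = i + 1
      have hlt2 : ((PQ i).1 + (PQ i).2).natDegree < (4*X*(PQ i).2).natDegree := by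
        have := natDegree_add_le (PQ i).1 (PQ i).2
        omega
      rw [sub_sub, natDegree_sub_eq_left_of_natDegree_lt hlt2, h4X]
    · show (4*X*(PQ i).2 - (PQ i).1 - (PQ i).2).leadingCoeff = (4 ^ (i+1) : ℤ)
      have hdeg2 : ((PQ i).1 + (PQ i).2).degree < (4*X*(PQ i).2).degree := by
        apply lt_of_le_of_lt (degree_add_le _ _)
        simp only [max_lt_iff]
        constructor
        · exact hdeg
        · apply degree_lt_degree; omega
      rw [sub_sub, leadingCoeff_sub_of_degree_lt hdeg2, h4Xl]

theorem stmt_8 (U : ℕ → ℝ → ℝ → ℝ)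
    (hU0 : ∀ x y : ℝ, U 0 x y = 1)
    (hU1 : ∀ x y : ℝ, U 1 x y = 2 * x)
    (hUeven : ∀ i : ℕ, 1 ≤ i → ∀ x y : ℝ,
      U (2 * i) x y = 2 * y * U (2 * i - 1) x y - U (2 * i - 2) x y)
    (hUodd : ∀ i : ℕ, 1 ≤ i → ∀ x y : ℝ,
      U (2 * i + 1) x y = 2 * x * U (2 * i) x y - U (2 * i - 1) x y) :
    ∀ i : ℕ, ∃ P : Polynomial ℤ, P.natDegree = i ∧ P.leadingCoeff = 4 ^ i ∧
      ∀ x y : ℝ, U (2 * i) x y = (P.map (Int.castRingHom ℝ)).eval (x * y) := by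
  have key : ∀ i : ℕ, ∀ x y : ℝ,
      U (2 * i) x y = ((PQ i).1.map (Int.castRingHom ℝ)).eval (x * y) ∧
      U (2 * i + 1) x y = 2 * x * (((PQ i).2.map (Int.castRingHom ℝ)).eval (x * y)) := by
    intro i
    induction i with
    | zero => intro x y; simp [PQ, hU0, hU1]
    | succ i ih =>
      intro x y
      obtain ⟨h1, h2⟩ := ih x y
      have e1 : 2 * (i + 1) - 1 = 2 * i + 1 := by omega
      have e2 : 2 * (i + 1) - 2 = 2 * i := by omega
      have heven := hUeven (i + 1) (by omega) x y
      rw [e1, e2, h1, h2] at heven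
      have hP : U (2 * (i+1)) x y = ((PQ (i+1)).1.map (Int.castRingHom ℝ)).eval (x * y) := by
        rw [heven]
        simp [PQ, Polynomial.map_sub, Polynomial.map_mul, Polynomial.map_ofNat]
        ring
      refine ⟨hP, ?_⟩
      have hodd := hUodd (i + 1) (by omega) x y
      rw [e1, h2, hP] at hodd
      rw [hodd]
      simp [PQ, Polynomial.map_sub, Polynomial.map_mul, Polynomial.map_ofNat]
      ring
  intro i
  exact ⟨(PQ i).1, (PQ_deg i).1, (PQ_deg i).2.1, fun x y => (key i x y).1⟩
end

section
/- Let U : ℕ → ℝ → ℝ → ℝ be defined by U 0 x y = 1, U 1 x y = 2x, U (2i) x y = 2y·U (2i−1) x y − U (2i−2) x y and U (2i+1) x y = 2x·U (2i) x y − U (2i−1) x y for i ≥ 1. Then for every integer p ≥ 2, the set { s : ℝ | ∃ x y : ℝ, x·y = s ∧ U (2p−2) x y = 1 } is finite. -/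
open Polynomial

noncomputable def stmtPQ : ℕ → Polynomial ℝ × Polynomial ℝ
  | 0 => (1, 1)
  | (i+1) =>
    (C 4 * X * (stmtPQ i).2 - (stmtPQ i).1,
     C 4 * X * (stmtPQ i).2 - (stmtPQ i).1 - (stmtPQ i).2)

lemma stmtPQ_deg (i : ℕ) :
    (stmtPQ i).1.natDegree ≤ i ∧ (stmtPQ i).2.natDegree ≤ i ∧
    (stmtPQ i).1.coeff i = 4 ^ i ∧ (stmtPQ i).2.coeff i = 4 ^ i := by
  induction i with
  | zero => simp [stmtPQ]
  | succ i ih =>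
    obtain ⟨h1, h2, h3, h4⟩ := ih
    have hXQ : (C (4:ℝ) * X * (stmtPQ i).2).natDegree ≤ i + 1 := by
      refine le_trans (natDegree_mul_le) ?_
      have : (C (4:ℝ) * X).natDegree ≤ 1 :=
        le_trans natDegree_mul_le (by simp)
      omega
    have hd1 : (stmtPQ (i+1)).1.natDegree ≤ i + 1 := by
      refine le_trans (natDegree_sub_le _ _) ?_
      simp only [max_le_iff]
      exact ⟨hXQ, le_trans h1 (by omega)⟩
    have hcXQ : (C (4:ℝ) * X * (stmtPQ i).2).coeff (i+1) = 4 * 4 ^ i := by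
      rw [mul_assoc, coeff_C_mul, coeff_X_mul, h4]
    have hc1 : (stmtPQ (i+1)).1.coeff (i+1) = 4 ^ (i+1) := by
      show (C (4:ℝ) * X * (stmtPQ i).2 - (stmtPQ i).1).coeff (i+1) = _
      rw [coeff_sub, hcXQ, coeff_eq_zero_of_natDegree_lt (by omega)]
      ring
    refine ⟨hd1, ?_, hc1, ?_⟩
    · refine le_trans (natDegree_sub_le _ _) ?_
      simp only [max_le_iff]
      exact ⟨hd1, le_trans h2 (by omega)⟩
    · show ((stmtPQ (i+1)).1 - (stmtPQ i).2).coeff (i+1) = _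
      rw [coeff_sub, hc1, coeff_eq_zero_of_natDegree_lt (by omega)]
      ring

theorem stmt_10 (U : ℕ → ℝ → ℝ → ℝ)
    (hU0 : ∀ x y : ℝ, U 0 x y = 1)
    (hU1 : ∀ x y : ℝ, U 1 x y = 2 * x)
    (hUeven : ∀ i : ℕ, 1 ≤ i → ∀ x y : ℝ,
      U (2 * i) x y = 2 * y * U (2 * i - 1) x y - U (2 * i - 2) x y)
    (hUodd : ∀ i : ℕ, 1 ≤ i → ∀ x y : ℝ,
      U (2 * i + 1) x y = 2 * x * U (2 * i) x y - U (2 * i - 1) x y)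
    (p : ℕ) (hp : 2 ≤ p) :
    Set.Finite { s : ℝ | ∃ x y : ℝ, x * y = s ∧ U (2 * p - 2) x y = 1 } := by
  -- key: U (2i) x y = eval (x*y) (stmtPQ i).1 and U (2i+1) x y = 2x * eval (x*y) (stmtPQ i).2
  have key : ∀ i : ℕ, ∀ x y : ℝ,
      U (2 * i) x y = ((stmtPQ i).1).eval (x * y) ∧
      U (2 * i + 1) x y = 2 * x * ((stmtPQ i).2).eval (x * y) := by
    intro i
    induction i with
    | zero => intro x y; simp [stmtPQ, hU0, hU1]
    | succ i ih =>
      intro x y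
      obtain ⟨he, ho⟩ := ih x y
      have e1 : 2 * (i + 1) - 1 = 2 * i + 1 := by omega
      have e2 : 2 * (i + 1) - 2 = 2 * i := by omega
      have heven := hUeven (i + 1) (by omega) x y
      rw [e1, e2, he, ho] at heven
      have hnew : U (2 * (i+1)) x y = ((stmtPQ (i+1)).1).eval (x * y) := by
        rw [heven]
        show _ = (C 4 * X * (stmtPQ i).2 - (stmtPQ i).1).eval (x*y)
        simp only [eval_sub, eval_mul, eval_C, eval_X]
        ring
      refine ⟨hnew, ?_⟩
      have hodd := hUodd (i + 1) (by omega) x y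
      rw [e1, ho, hnew] at hodd
      rw [hodd]
      show _ = 2 * x * ((stmtPQ (i+1)).1 - (stmtPQ i).2).eval (x*y)
      simp only [eval_sub]
      ring
  set F : Polynomial ℝ := (stmtPQ (p - 1)).1 - 1 with hF
  have hFne : F ≠ 0 := by
    intro h
    have := stmtPQ_deg (p - 1)
    have hc : F.coeff (p - 1) = 4 ^ (p - 1) := by
      rw [hF, coeff_sub, this.2.2.1]
      have : (1 : Polynomial ℝ).coeff (p - 1) = 0 := by
        rw [← C_1, coeff_C, if_neg (by omega)]
      rw [this]; ring
    rw [h] at hc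
    simp at hc
    exact pow_ne_zero _ (by norm_num : (4:ℝ) ≠ 0) hc.symm
  have hfin : {s : ℝ | F.IsRoot s}.Finite := Polynomial.finite_setOf_isRoot hFne
  refine hfin.subset ?_
  rintro s ⟨x, y, hxy, hU⟩
  have e3 : 2 * p - 2 = 2 * (p - 1) := by omega
  rw [e3] at hU
  have := (key (p - 1) x y).1
  rw [hU, hxy] at this
  show F.IsRoot s
  simp [hF, IsRoot, ← this]
end

section
/- In ℝ⁴, the plane spanned by the vectors u₂(√2) = (−√2, 0, √2, 2) and v₂(√2) = (0, 1, √2, 1) equals the plane spanned by the vectors (cos(0·π/4), cos(1·π/4), cos(2·π/4), cos(3·π/4)) and (sin(0·π/4), sin(1·π/4), sin(2·π/4), sin(3·π/4)); i.e. Submodule.span ℝ {u₂(√2), v₂(√2)} = Submodule.span ℝ {(cos(kπ/4))_{k=0..3}, (sin(kπ/4))_{k=0..3}}. -/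
theorem stmt_11 :
    Submodule.span ℝ
        ({![-(Real.sqrt 2), 0, Real.sqrt 2, 2], ![0, 1, Real.sqrt 2, 1]} : Set (Fin 4 → ℝ)) =
      Submodule.span ℝ
        ({(fun k : Fin 4 => Real.cos (k * Real.pi / 4)),
          (fun k : Fin 4 => Real.sin (k * Real.pi / 4))} : Set (Fin 4 → ℝ)) := by
  have h2 : Real.sqrt 2 * Real.sqrt 2 = 2 := Real.mul_self_sqrt (by norm_num)
  have hc : (fun k : Fin 4 => Real.cos (k * Real.pi / 4))
      = ![1, Real.sqrt 2 / 2, 0, -(Real.sqrt 2 / 2)] := by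
    funext k
    fin_cases k <;>
      norm_num [show ((1:Fin 4):ℝ) = 1 by norm_num, show ((2:Fin 4):ℝ) = 2 by norm_num,
        show ((3:Fin 4):ℝ) = 3 by norm_num [show ((3:Fin 4):ℕ)=3 from rfl],
        Real.cos_pi_div_four,
        show (2:ℝ)*Real.pi/4 = Real.pi/2 by ring, Real.cos_pi_div_two,
        show (3:ℝ)*Real.pi/4 = Real.pi - Real.pi/4 by ring, Real.cos_pi_sub]
  have hs : (fun k : Fin 4 => Real.sin (k * Real.pi / 4))
      = ![0, Real.sqrt 2 / 2, 1, Real.sqrt 2 / 2] := by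
    funext k
    fin_cases k <;>
      norm_num [show ((1:Fin 4):ℝ) = 1 by norm_num, show ((2:Fin 4):ℝ) = 2 by norm_num,
        show ((3:Fin 4):ℝ) = 3 by norm_num [show ((3:Fin 4):ℕ)=3 from rfl],
        Real.sin_pi_div_four,
        show (2:ℝ)*Real.pi/4 = Real.pi/2 by ring, Real.sin_pi_div_two,
        show (3:ℝ)*Real.pi/4 = Real.pi - Real.pi/4 by ring, Real.sin_pi_sub]
  rw [hc, hs]
  have hne : Real.sqrt 2 ≠ 0 := by positivity
  apply le_antisymm
  · rw [Submodule.span_le]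
    rintro x (rfl | rfl)
    · rw [SetLike.mem_coe, Submodule.mem_span_pair]
      exact ⟨-(Real.sqrt 2), Real.sqrt 2, by
        funext k; fin_cases k <;> simp <;> nlinarith [h2]⟩
    · rw [SetLike.mem_coe, Submodule.mem_span_pair]
      exact ⟨0, Real.sqrt 2, by
        funext k; fin_cases k <;> simp <;> nlinarith [h2]⟩
  · rw [Submodule.span_le]
    rintro x (rfl | rfl)
    · rw [SetLike.mem_coe, Submodule.mem_span_pair]
      exact ⟨-(Real.sqrt 2)⁻¹, (Real.sqrt 2)⁻¹, by
        funext k; fin_cases k <;> simp <;> field_simp <;> nlinarith [h2]⟩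
    · rw [SetLike.mem_coe, Submodule.mem_span_pair]
      exact ⟨0, (Real.sqrt 2)⁻¹, by
        funext k; fin_cases k <;> simp <;> field_simp <;> nlinarith [h2]⟩
end

section
/- For t ∈ ℝ let G_{ij}(t) = u_i(t)·v_j(t) − u_j(t)·v_i(t) for 1 ≤ i < j ≤ 4, where u(t) = (−t, 0, t, 2) and v(t) = (0, 1, t, 1). Then for all integers a, b, c and all 1 ≤ i < j < k ≤ 4: if a·G_{jk}(√2) − b·G_{ik}(√2) + c·G_{ij}(√2) = 0, then a·G_{jk}(t) − b·G_{ik}(t) + c·G_{ij}(t) = 0 for every real t ≠ 0. -/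
/-- `u t = (-t, 0, t, 2)`, the first basis vector of the plane `E_t` (8-fold family). -/
noncomputable def u8 (t : ℝ) : Fin 4 → ℝ := ![-t, 0, t, 2]

/-- `v t = (0, 1, t, 1)`, the second basis vector of the plane `E_t` (8-fold family). -/
noncomputable def v8 (t : ℝ) : Fin 4 → ℝ := ![0, 1, t, 1]

/-- Grassmann coordinates of `E_t`. -/
noncomputable def G8 (t : ℝ) (i j : Fin 4) : ℝ := u8 t i * v8 t j - u8 t j * v8 t i

lemma key8 (m n : ℤ) (h : (m : ℝ) * Real.sqrt 2 + n = 0) : m = 0 ∧ n = 0 := by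
  have hirr := irrational_sqrt_two
  by_cases hm : m = 0
  · subst hm
    simp at h
    exact ⟨rfl, by exact_mod_cast h⟩
  · exfalso
    have : Real.sqrt 2 = (-n : ℝ) / m := by
      field_simp
      linarith
    apply hirr
    rw [this]
    exact ⟨(-n : ℚ) / m, by push_cast; ring⟩

theorem stmt_16 (a b c : ℤ) (i j k : Fin 4) (hij : i < j) (hjk : j < k)
    (h : (a : ℝ) * G8 (Real.sqrt 2) j k - (b : ℝ) * G8 (Real.sqrt 2) i k
        + (c : ℝ) * G8 (Real.sqrt 2) i j = 0) :
    ∀ t : ℝ, t ≠ 0 → (a : ℝ) * G8 t j k - (b : ℝ) * G8 t i k + (c : ℝ) * G8 t i j = 0 := by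
  intro t _
  have hs : Real.sqrt 2 * Real.sqrt 2 = 2 := Real.mul_self_sqrt (by norm_num)
  fin_cases i <;> fin_cases j <;> fin_cases k <;>
    first
      | exact absurd hij (by decide)
      | exact absurd hjk (by decide)
      | skip
  · -- (0,1,2)
    simp only [G8, u8, v8] at h ⊢
    norm_num at h ⊢
    obtain ⟨h1, h2⟩ := key8 (-(a + c)) (2 * b) (by push_cast; linear_combination h)
    have ha : a = -c := by omega
    have hb : b = 0 := by omega
    subst ha hb; push_cast; ring
  · -- (0,1,3)
    simp only [G8, u8, v8] at h ⊢
    norm_num at h ⊢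
    obtain ⟨h1, h2⟩ := key8 (b - c) (-(2 * a)) (by push_cast; linear_combination h)
    have hb : b = c := by omega
    have ha : a = 0 := by omega
    subst hb ha; push_cast; ring
  · -- (0,2,3)
    simp only [G8, u8, v8] at h ⊢
    norm_num at h ⊢
    obtain ⟨h1, h2⟩ := key8 (b - a) (-(2 * c)) (by push_cast; linear_combination h)
    have ha : a = b := by omega
    have hc : c = 0 := by omega
    subst ha hc; push_cast; ring
  · -- (1,2,3)
    simp only [G8, u8, v8] at h ⊢
    norm_num at h ⊢
    obtain ⟨h1, h2⟩ := key8 (-(a + c)) (2 * b) (by push_cast; linear_combination h)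
    have ha : a = -c := by omega
    have hb : b = 0 := by omega
    subst ha hb; push_cast; ring
end
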